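/- arXiv:0710.4945 — 2 statements merged into one kernel-verified Lean document; each statement's English description precedes it below -/
import Mathlib

section
/- Let ≤ be a monomial ordering of ℕ^N, let I be an ideal of R = K[x₁,…,x_N], let f ∈ R, and let (I:f) = {g ∈ R : g·f ∈ I}. Let G be a Gröbner basis of (I:f) with respect to ≤, and let nf_G(R) be the K-linear span of all monomials x^α that are not divisible by lm(g) for any nonzero g ∈ G. Then I + (f) = I ⊕ nf_G(R)·f, an internal direct sum of K-linear subspaces of R. -/
open MvPolynomial

/-- `le` is a monomial ordering of `ℕ^N`: a total ordering compatible with addition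
whose smallest element is `0`. -/
def IsMonomialOrder (N : ℕ) (le : (Fin N →₀ ℕ) → (Fin N →₀ ℕ) → Prop) : Prop :=
  (∀ a b, le a b ∨ le b a) ∧
  (∀ a b, le a b → le b a → a = b) ∧
  (∀ a b c, le a b → le b c → le a c) ∧
  (∀ a b c, le a b → le (a + c) (b + c)) ∧
  (∀ a, le 0 a)

/-- `α` is the exponent of the leading monomial of `f` with respect to `le`. -/
def IsLM {K : Type*} [Field K] {N : ℕ} (le : (Fin N →₀ ℕ) → (Fin N →₀ ℕ) → Prop)
    (f : MvPolynomial (Fin N) K) (α : Fin N →₀ ℕ) : Prop :=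
  α ∈ f.support ∧ ∀ β ∈ f.support, le β α

/-- The monomial `x^β` divides the monomial `x^α`. -/
def MonDvd {N : ℕ} (β α : Fin N →₀ ℕ) : Prop := ∃ γ, α = β + γ

/-- `G` is a Gröbner basis of the ideal `I` with respect to `le`. -/
def IsGroebnerBasis {K : Type*} [Field K] {N : ℕ}
    (le : (Fin N →₀ ℕ) → (Fin N →₀ ℕ) → Prop)
    (G : Finset (MvPolynomial (Fin N) K)) (I : Ideal (MvPolynomial (Fin N) K)) : Prop :=
  (∀ g ∈ G, g ≠ 0) ∧ (∀ g ∈ G, g ∈ I) ∧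
  Ideal.span (G : Set (MvPolynomial (Fin N) K)) = I ∧
  ∀ f ∈ I, f ≠ 0 → ∀ α, IsLM le f α → ∃ g ∈ G, ∃ β, IsLM le g β ∧ MonDvd β α

/-- A Gröbner basis `G` is reduced: each element has leading coefficient `1`, and no
monomial in the support of `g ∈ G` is divisible by the leading monomial of another
element of `G`. -/
def IsReducedGB {K : Type*} [Field K] {N : ℕ}
    (le : (Fin N →₀ ℕ) → (Fin N →₀ ℕ) → Prop)
    (G : Finset (MvPolynomial (Fin N) K)) : Prop :=
  ∀ g ∈ G, (∀ α, IsLM le g α → coeff α g = 1) ∧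
    ∀ g' ∈ G, g' ≠ g → ∀ α ∈ g.support, ∀ β, IsLM le g' β → ¬ MonDvd β α

/-- `D(N,d) = 2·(d²/2 + d)^(2^(N−1))`. -/
def Dub (N d : ℕ) : ℚ := 2 * ((d : ℚ) ^ 2 / 2 + (d : ℚ)) ^ (2 ^ (N - 1))

section Aux

variable {K : Type*} [Field K] {N : ℕ}
variable {le : (Fin N →₀ ℕ) → (Fin N →₀ ℕ) → Prop}

/-- Any nonempty finset has a `le`-maximum. -/
lemma finset_exists_max (hle : IsMonomialOrder N le) :
    ∀ s : Finset (Fin N →₀ ℕ), s.Nonempty → ∃ a ∈ s, ∀ b ∈ s, le b a := by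
  classical
  intro s
  induction s using Finset.induction with
  | empty => rintro ⟨x, hx⟩; simp at hx
  | @insert a s hnot ih =>
    intro _
    rcases s.eq_empty_or_nonempty with hs | hs
    · subst hs
      refine ⟨a, by simp, ?_⟩
      intro b hb
      simp only [Finset.mem_insert, Finset.notMem_empty, or_false] at hb
      subst hb
      rcases hle.1 b b with h | h <;> exact h
    · obtain ⟨m, hm, hmax⟩ := ih hs
      rcases hle.1 a m with h | h
      · exact ⟨m, Finset.mem_insert_of_mem hm, by
          intro b hb
          rcases Finset.mem_insert.mp hb with rfl | hb
          · exact h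
          · exact hmax b hb⟩
      · exact ⟨a, Finset.mem_insert_self _ _, by
          intro b hb
          rcases Finset.mem_insert.mp hb with rfl | hb
          · rcases hle.1 b b with h' | h' <;> exact h'
          · exact hle.2.2.1 b m a (hmax b hb) h⟩

lemma lm_exists (hle : IsMonomialOrder N le) (p : MvPolynomial (Fin N) K) (hp : p ≠ 0) :
    ∃ α, IsLM le p α := by
  obtain ⟨a, ha, hmax⟩ := finset_exists_max hle p.support
    (MvPolynomial.support_nonempty.mpr hp)
  exact ⟨a, ha, hmax⟩

/-- Pointwise order implies `le`. -/
lemma pointwise_imp (hle : IsMonomialOrder N le) {a b : Fin N →₀ ℕ} (h : a ≤ b) : le a b := by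
  obtain ⟨c, rfl⟩ := le_iff_exists_add.mp h
  have := hle.2.2.2.1 0 c a (hle.2.2.2.2 c)
  simpa [add_comm] using this

/-- The strict order associated to a monomial order is well-founded (Dickson). -/
lemma lt_wf (hle : IsMonomialOrder N le) :
    WellFounded (fun a b : Fin N →₀ ℕ => le a b ∧ a ≠ b) := by
  haveI : IsTrans (Fin N →₀ ℕ) (fun a b => le a b ∧ a ≠ b) := by
    constructor
    rintro a b c ⟨hab, hab'⟩ ⟨hbc, hbc'⟩
    refine ⟨hle.2.2.1 a b c hab hbc, ?_⟩
    rintro rfl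
    exact hbc' (hle.2.1 _ _ hbc hab)
  haveI : IsIrrefl (Fin N →₀ ℕ) (fun a b => le a b ∧ a ≠ b) := by
    constructor; rintro a ⟨_, h⟩; exact h rfl
  haveI : IsStrictOrder (Fin N →₀ ℕ) (fun a b => le a b ∧ a ≠ b) := {}
  rw [RelEmbedding.wellFounded_iff_isEmpty]
  constructor
  intro f
  obtain ⟨m, n, hmn, hle'⟩ := (wellQuasiOrdered_le (α := Fin N →₀ ℕ))
    (fun k => f k)
  have h1 : le (f m) (f n) := pointwise_imp hle hle'
  have h2 : le (f n) (f m) ∧ f n ≠ f m := f.map_rel_iff.mpr hmn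
  exact h2.2 (hle.2.1 _ _ h2.1 h1)

/-- Elements of the span of a set of monomials have their support in the defining set. -/
lemma span_monomial_support {P : (Fin N →₀ ℕ) → Prop} {r : MvPolynomial (Fin N) K}
    (hr : r ∈ Submodule.span K {m : MvPolynomial (Fin N) K |
      ∃ α : Fin N →₀ ℕ, m = MvPolynomial.monomial α 1 ∧ P α}) :
    ∀ β ∈ r.support, P β := by
  induction hr using Submodule.span_induction with
  | mem x h =>
    obtain ⟨α, rfl, hP⟩ := h
    intro β hβ
    classical
    rw [MvPolynomial.support_monomial] at hβ
    simp only [if_neg (one_ne_zero : (1 : K) ≠ 0), Finset.mem_singleton] at hβ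
    subst hβ; exact hP
  | zero => simp
  | add x y hx hy ihx ihy =>
    intro β hβ
    rcases Finset.mem_union.mp (MvPolynomial.support_add hβ) with h | h
    · exact ihx β h
    · exact ihy β h
  | smul a x hx ihx =>
    intro β hβ
    exact ihx β (MvPolynomial.support_smul hβ)

/-- After subtracting something with the same leading coefficient, all remaining
monomials are strictly below `α`. -/
lemma sub_support_lt (hle : IsMonomialOrder N le) {p t : MvPolynomial (Fin N) K}
    {α : Fin N →₀ ℕ} (hp : IsLM le p α) (ht : MvPolynomial.coeff α t = MvPolynomial.coeff α p)
    (hts : ∀ δ ∈ t.support, le δ α) :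
    ∀ δ ∈ (p - t).support, le δ α ∧ δ ≠ α := by
  intro δ hδ
  have hδ' : MvPolynomial.coeff δ p - MvPolynomial.coeff δ t ≠ 0 := by
    simpa [MvPolynomial.coeff_sub] using MvPolynomial.mem_support_iff.mp hδ
  constructor
  · by_cases h : MvPolynomial.coeff δ p = 0
    · refine hts δ (MvPolynomial.mem_support_iff.mpr ?_)
      intro h'; rw [h, h'] at hδ'; simp at hδ'
    · exact hp.2 δ (MvPolynomial.mem_support_iff.mpr h)
  · rintro rfl
    rw [ht] at hδ'
    simp at hδ'

end Aux


lemma decompose {K : Type*} [Field K] {N : ℕ}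
    {le : (Fin N →₀ ℕ) → (Fin N →₀ ℕ) → Prop} (hle : IsMonomialOrder N le)
    (J : Ideal (MvPolynomial (Fin N) K)) (G : Finset (MvPolynomial (Fin N) K))
    (hG : IsGroebnerBasis le G J)
    (NF : Submodule K (MvPolynomial (Fin N) K))
    (hNF : NF = Submodule.span K {m : MvPolynomial (Fin N) K | ∃ α : Fin N →₀ ℕ,
      m = MvPolynomial.monomial α 1 ∧ ∀ g ∈ G, ∀ β, IsLM le g β → ¬ MonDvd β α})
    (p : MvPolynomial (Fin N) K) :
    p ∈ Submodule.restrictScalars K J ⊔ NF := by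
  classical
  set S := Submodule.restrictScalars K J ⊔ NF with hS
  have main : ∀ α : Fin N →₀ ℕ, ∀ p : MvPolynomial (Fin N) K, IsLM le p α → p ∈ S := by
    intro α
    induction α using (lt_wf hle).induction with
    | _ α IH =>
      intro p hlm
      have hc0 : MvPolynomial.coeff α p ≠ 0 := MvPolynomial.mem_support_iff.mp hlm.1
      have ht : ∃ t, t ∈ S ∧ MvPolynomial.coeff α t = MvPolynomial.coeff α p ∧
          ∀ δ ∈ t.support, le δ α := by
        by_cases hdvd : ∃ g ∈ G, ∃ β, IsLM le g β ∧ MonDvd β α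
        · obtain ⟨g, hg, β, hβ, γ, hγ⟩ := hdvd
          have hd0 : MvPolynomial.coeff β g ≠ 0 := MvPolynomial.mem_support_iff.mp hβ.1
          refine ⟨MvPolynomial.monomial γ (MvPolynomial.coeff α p *
              (MvPolynomial.coeff β g)⁻¹) * g, ?_, ?_, ?_⟩
          · exact Submodule.mem_sup_left (Ideal.mul_mem_left J _ (hG.2.1 g hg))
          · rw [hγ, add_comm β γ, MvPolynomial.coeff_monomial_mul]
            field_simp
          · intro δ hδ
            have hmem := MvPolynomial.support_mul _ _ hδ
            rw [Finset.mem_add] at hmem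
            obtain ⟨a, ha, b, hb, rfl⟩ := hmem
            rw [MvPolynomial.support_monomial] at ha
            rw [if_neg (mul_ne_zero hc0 (inv_ne_zero hd0))] at ha
            rw [Finset.mem_singleton] at ha
            have hbβ : le b β := hβ.2 b hb
            have h2 := hle.2.2.2.1 b β γ hbβ
            rw [hγ, ha, add_comm γ b]
            exact h2
        · push_neg at hdvd
          refine ⟨MvPolynomial.monomial α (MvPolynomial.coeff α p), ?_,
            by simp [MvPolynomial.coeff_monomial], ?_⟩
          · apply Submodule.mem_sup_right
            rw [hNF]
            have heq : MvPolynomial.monomial α (MvPolynomial.coeff α p) =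
                MvPolynomial.coeff α p • MvPolynomial.monomial α (1 : K) := by
              rw [MvPolynomial.smul_monomial, smul_eq_mul, mul_one]
            rw [heq]
            exact Submodule.smul_mem _ _ (Submodule.subset_span
              ⟨α, rfl, fun g hg β hβ => hdvd g hg β hβ⟩)
          · intro δ hδ
            rw [MvPolynomial.support_monomial, if_neg hc0, Finset.mem_singleton] at hδ
            rw [hδ]
            exact hlm.2 α hlm.1
      obtain ⟨t, htS, htc, hts⟩ := ht
      by_cases h0 : p - t = 0
      · rwa [show p = t from (sub_eq_zero.mp h0)]
      · obtain ⟨α', hα'⟩ := lm_exists hle _ h0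
        have hlt := (sub_support_lt hle hlm htc hts) α' hα'.1
        have hmem : p - t ∈ S := IH α' hlt _ hα'
        have := S.add_mem htS hmem
        simpa using this
  by_cases hp : p = 0
  · simp [S, hp]
  · obtain ⟨α, hα⟩ := lm_exists hle p hp
    exact main α p hα

theorem ideal_plus_principal_decomposition {K : Type*} [Field K]
    {N : ℕ} (hN : 1 ≤ N)
    (le : (Fin N →₀ ℕ) → (Fin N →₀ ℕ) → Prop) (hle : IsMonomialOrder N le)
    (I : Ideal (MvPolynomial (Fin N) K)) (f : MvPolynomial (Fin N) K)
    (J : Ideal (MvPolynomial (Fin N) K))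
    (hJ : ∀ g, g ∈ J ↔ g * f ∈ I)  -- `J = (I : f)`
    (G : Finset (MvPolynomial (Fin N) K)) (hG : IsGroebnerBasis le G J)
    (NF : Submodule K (MvPolynomial (Fin N) K))
    -- `NF = nf_G(R)`, the span of the monomials not divisible by any `lm g`, `g ∈ G`
    (hNF : NF = Submodule.span K {m : MvPolynomial (Fin N) K | ∃ α : Fin N →₀ ℕ,
      m = monomial α 1 ∧ ∀ g ∈ G, ∀ β, IsLM le g β → ¬ MonDvd β α}) :
    Submodule.restrictScalars K (I + Ideal.span {f}) =
        Submodule.restrictScalars K I ⊔ Submodule.map (LinearMap.mulRight K f) NF ∧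
      Disjoint (Submodule.restrictScalars K I)
        (Submodule.map (LinearMap.mulRight K f) NF) := by
  classical
  have key := decompose hle J G hG NF hNF
  have hNFsupp : ∀ r ∈ NF, ∀ β ∈ r.support,
      ∀ g ∈ G, ∀ γ, IsLM le g γ → ¬ MonDvd γ β := by
    intro r hr β hβ
    exact span_monomial_support (hNF ▸ hr) β hβ
  have hzero : ∀ r ∈ NF, r ∈ J → r = 0 := by
    intro r hr hrJ
    by_contra hr0
    obtain ⟨α, hα⟩ := lm_exists hle r hr0
    obtain ⟨g, hg, β, hβ, hdvd⟩ := hG.2.2.2 r hrJ hr0 α hα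
    exact hNFsupp r hr α hα.1 g hg β hβ hdvd
  constructor
  · apply le_antisymm
    · intro x hx
      rw [Submodule.restrictScalars_mem] at hx
      rw [Submodule.add_eq_sup] at hx
      obtain ⟨i, hi, y, hy, rfl⟩ := Submodule.mem_sup.mp hx
      rw [Ideal.mem_span_singleton'] at hy
      obtain ⟨p, rfl⟩ := hy
      obtain ⟨q, hq, r, hr, hqr⟩ := Submodule.mem_sup.mp (key p)
      rw [Submodule.restrictScalars_mem] at hq
      have heq : i + p * f = (i + q * f) + r * f := by
        rw [← hqr]; ring
      rw [heq]
      apply Submodule.add_mem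
      · exact Submodule.mem_sup_left ((Submodule.restrictScalars_mem K _ _).mpr
            (I.add_mem hi ((hJ q).mp hq)))
      · exact Submodule.mem_sup_right ⟨r, hr, by simp [LinearMap.mulRight_apply]⟩
    · apply sup_le
      · intro x hx
        rw [Submodule.restrictScalars_mem] at hx ⊢
        rw [Submodule.add_eq_sup]
        exact Submodule.mem_sup_left hx
      · rintro _ ⟨r, hr, rfl⟩
        rw [Submodule.restrictScalars_mem, Submodule.add_eq_sup]
        exact Submodule.mem_sup_right (by
          rw [Ideal.mem_span_singleton']
          exact ⟨r, by simp [LinearMap.mulRight_apply]⟩)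
  · rw [Submodule.disjoint_def]
    rintro x hxI ⟨r, hr, rfl⟩
    simp only [LinearMap.mulRight_apply] at hxI ⊢
    have hrJ : r ∈ J := (hJ r).mpr (by
      simpa using (Submodule.restrictScalars_mem K _ _).mp hxI)
    rw [hzero r hr hrJ, zero_mul]
end

section
/- Let M be a homogeneous K-linear subspace of R = K[x₁,…,x_N] admitting a cone decomposition 𝒟. Then for every integer e > deg 𝒟, the Hilbert function of M satisfies H_M(e) = Σ_{(w,y,h)∈𝒟⁺} C(e − |w| − deg(h) + #y − 1, #y − 1), where C(·,·) denotes the binomial coefficient; in particular H_M agrees with a polynomial in e for all e > deg 𝒟. -/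
open MvPolynomial
open scoped Classical

/-- A cone triple `(w, y, h)`: a multi-index `w`, a set `y` of variables, and a
polynomial `h`. -/
abbrev ConeTriple (N : ℕ) (K : Type*) [Field K] :=
  (Fin N →₀ ℕ) × Finset (Fin N) × MvPolynomial (Fin N) K

/-- The degree `|w| + deg h` of a cone triple `(w, y, h)`. -/
noncomputable def coneDeg {N : ℕ} {K : Type*} [Field K] (p : ConeTriple N K) : ℕ :=
  (∑ i, p.1 i) + p.2.2.totalDegree

/-- The cone `C(w,y,h)`: the `K`-linear span of all `x^(w+γ)·h` with `γ` supported
on `y`. -/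
noncomputable def cone {N : ℕ} {K : Type*} [Field K] (p : ConeTriple N K) :
    Submodule K (MvPolynomial (Fin N) K) :=
  Submodule.span K {q | ∃ γ : Fin N →₀ ℕ, (∀ i ∉ p.2.1, γ i = 0) ∧
    q = monomial (p.1 + γ) 1 * p.2.2}

/-- A homogeneous `K`-linear subspace of the polynomial ring. -/
def IsHomogeneousSubspace {N : ℕ} {K : Type*} [Field K]
    (M : Submodule K (MvPolynomial (Fin N) K)) : Prop :=
  ∀ f ∈ M, ∀ e : ℕ, homogeneousComponent e f ∈ M

/-- `𝒟` is a cone decomposition of `M`: each triple consists of a nonzero homogeneous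
`h`, each cone is contained in `M`, and `M` is the internal direct sum of the cones. -/
def IsConeDecomp {N : ℕ} {K : Type*} [Field K] (𝒟 : Finset (ConeTriple N K))
    (M : Submodule K (MvPolynomial (Fin N) K)) : Prop :=
  (∀ p ∈ 𝒟, p.2.2 ≠ 0 ∧ ∃ e : ℕ, p.2.2.IsHomogeneous e) ∧
  (∀ p ∈ 𝒟, cone p ≤ M) ∧
  M = (⨆ p ∈ 𝒟, cone p) ∧
  ∀ p ∈ 𝒟, Disjoint (cone p) (⨆ q ∈ 𝒟.erase p, cone q)

/-- `𝒟` is `d`-standard. -/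
def IsStandardDecomp {N : ℕ} {K : Type*} [Field K] (d : ℕ)
    (𝒟 : Finset (ConeTriple N K)) : Prop :=
  (∀ p ∈ 𝒟, p.2.1.Nonempty → d ≤ coneDeg p) ∧
  ∀ p ∈ 𝒟, p.2.1.Nonempty → ∀ d', d ≤ d' → d' ≤ coneDeg p →
    ∃ q ∈ 𝒟, q.2.1.Nonempty ∧ coneDeg q = d' ∧ p.2.1.card ≤ q.2.1.card

/-- The degree of a cone decomposition, as an element of `ℕ ∪ {−∞}`. -/
noncomputable def decompDeg {N : ℕ} {K : Type*} [Field K] (𝒟 : Finset (ConeTriple N K)) :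
    WithBot ℕ :=
  (𝒟.image coneDeg).max


lemma sum_eq_degree {N : ℕ} (d : Fin N →₀ ℕ) : (∑ i, d i) = d.degree := by
  rw [Finsupp.degree]
  exact (Finset.sum_subset (Finset.subset_univ _)
    (fun i _ h => Finsupp.notMem_support_iff.mp h)).symm

lemma degree_subtypeDomain {N : ℕ} (y : Finset (Fin N)) (γ : Fin N →₀ ℕ)
    (h : (γ.support : Set (Fin N)) ⊆ ↑y) :
    (Finsupp.subtypeDomain (· ∈ (↑y : Set (Fin N))) γ).degree = ∑ i, γ i := by
  rw [Finsupp.degree_apply, Finsupp.support_subtypeDomain]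
  simp only [Finsupp.subtypeDomain_apply]
  rw [Finset.sum_subtype_eq_sum_filter]
  rw [Finset.filter_true_of_mem (fun i hi => h hi), sum_eq_degree, Finsupp.degree_apply]

lemma degree_eq_sum_id {T : Type*} (f : T →₀ ℕ) : f.sum (fun _ => id) = f.degree := rfl

noncomputable def finsuppDegreeEquivSym (T : Type*) (m : ℕ) :
    {δ : T →₀ ℕ // δ.degree = m} ≃ Sym T m where
  toFun δ := ⟨Finsupp.toMultiset δ.1, by
      rw [Finsupp.card_toMultiset, degree_eq_sum_id, δ.2]⟩
  invFun s := ⟨Multiset.toFinsupp s.1, by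
      rw [← degree_eq_sum_id, ← Finsupp.card_toMultiset, Multiset.toFinsupp_toMultiset]
      exact s.2⟩
  left_inv δ := Subtype.ext (Finsupp.toMultiset_toFinsupp δ.1)
  right_inv s := Subtype.ext (Multiset.toFinsupp_toMultiset s.1)

noncomputable def fiberEquivSym {N : ℕ} (y : Finset (Fin N)) (d e : ℕ) (hde : d ≤ e) :
    {γ : Fin N →₀ ℕ // (∀ i ∉ y, γ i = 0) ∧ d + ∑ i, γ i = e} ≃
      Sym (↑y : Set (Fin N)) (e - d) := by
  refine Equiv.trans (Equiv.subtypeEquivRight (q := fun γ : Fin N →₀ ℕ =>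
      ((γ.support : Set (Fin N)) ⊆ ↑y) ∧ d + ∑ i, γ i = e) (fun γ => ?_)) ?_
  · constructor
    · rintro ⟨h1, h2⟩
      refine ⟨fun i hi => ?_, h2⟩
      by_contra hy
      exact (Finsupp.mem_support_iff.mp hi) (h1 i hy)
    · rintro ⟨h1, h2⟩
      refine ⟨fun i hi => ?_, h2⟩
      by_contra h0
      exact hi (h1 (Finsupp.mem_support_iff.mpr h0))
  refine Equiv.trans (Equiv.subtypeSubtypeEquivSubtypeInter
      (fun γ : Fin N →₀ ℕ => (γ.support : Set (Fin N)) ⊆ ↑y)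
      (fun γ => d + ∑ i, γ i = e)).symm ?_
  refine Equiv.trans (Equiv.subtypeEquiv (p := fun x : {γ : Fin N →₀ ℕ //
        (γ.support : Set (Fin N)) ⊆ ↑y} => d + ∑ i, x.1 i = e)
      (q := fun δ : (↑y : Set (Fin N)) →₀ ℕ => d + δ.degree = e)
      (Finsupp.restrictSupportEquiv (↑y : Set (Fin N)) ℕ) (fun x => ?_)) ?_
  · have : (Finsupp.restrictSupportEquiv (↑y : Set (Fin N)) ℕ x).degree = ∑ i, x.1 i :=
      degree_subtypeDomain y x.1 x.2
    show d + ∑ i, x.1 i = e ↔ d + (Finsupp.restrictSupportEquiv (↑y : Set (Fin N)) ℕ x).degree = e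
    rw [this]
  refine Equiv.trans (Equiv.subtypeEquivRight (q := fun δ : (↑y : Set (Fin N)) →₀ ℕ =>
      δ.degree = e - d) (fun δ => by omega)) ?_
  exact finsuppDegreeEquivSym _ _

lemma mon_mul_homog {N : ℕ} {K : Type*} [Field K] (p : ConeTriple N K)
    (hh : p.2.2.IsHomogeneous p.2.2.totalDegree) (γ : Fin N →₀ ℕ) :
    monomial (p.1 + γ) 1 * p.2.2 ∈
      homogeneousSubmodule (Fin N) K (coneDeg p + ∑ i, γ i) := by
  rw [mem_homogeneousSubmodule]
  have hdeg : (p.1 + γ).degree = (∑ i, p.1 i) + ∑ i, γ i := by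
    rw [← sum_eq_degree]
    simp [Finsupp.add_apply, Finset.sum_add_distrib]
  have h1 : coneDeg p + ∑ i, γ i = ((∑ i, p.1 i) + ∑ i, γ i) + p.2.2.totalDegree := by
    rw [coneDeg]; ring
  rw [h1]
  exact (isHomogeneous_monomial (1 : K) hdeg).mul hh

theorem finrank_of_cone_decomp {K : Type*} [Field K]
    {N : ℕ} (M : Submodule K (MvPolynomial (Fin N) K))
    (𝒟 : Finset (ConeTriple N K)) (h𝒟 : IsConeDecomp 𝒟 M)
    (e : ℕ) (he : ∀ p ∈ 𝒟, coneDeg p < e) :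
    Module.finrank K ↥(M ⊓ homogeneousSubmodule (Fin N) K e) =
      (∑ p ∈ 𝒟.filter (fun p => p.2.1.Nonempty),
        (e - coneDeg p + p.2.1.card - 1).choose (p.2.1.card - 1)) := by
  obtain ⟨hhom, hle, hsup, hdisj⟩ := h𝒟
  -- homogeneity of the h's
  have hh : ∀ p ∈ 𝒟, p.2.2.IsHomogeneous p.2.2.totalDegree := by
    intro p hp
    obtain ⟨hne, n, hn⟩ := hhom p hp
    rwa [hn.totalDegree hne]
  -- the index type
  set fib : {x // x ∈ 𝒟} → Type _ := fun j =>
    {γ : Fin N →₀ ℕ // (∀ i ∉ j.1.2.1, γ i = 0) ∧ coneDeg j.1 + ∑ i, γ i = e} with hfib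
  set f : ∀ j : {x // x ∈ 𝒟}, fib j → MvPolynomial (Fin N) K := fun j γ =>
    monomial (j.1.1 + γ.1) 1 * j.1.2.2 with hf
  -- each f j γ lies in cone j and is homogeneous of degree e
  have hmem : ∀ (j : {x // x ∈ 𝒟}) (γ : fib j), f j γ ∈ cone j.1 := fun j γ =>
    Submodule.subset_span ⟨γ.1, γ.2.1, rfl⟩
  have hhomog : ∀ (j : {x // x ∈ 𝒟}) (γ : fib j),
      f j γ ∈ homogeneousSubmodule (Fin N) K e := by
    intro j γ
    have := mon_mul_homog j.1 (hh j.1 j.2) γ.1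
    rwa [γ.2.2] at this
  -- span of range equals the degree-e part of M
  have hspan : Submodule.span K (Set.range fun ji : Σ j, fib j => f ji.1 ji.2) =
      M ⊓ homogeneousSubmodule (Fin N) K e := by
    apply le_antisymm
    · rw [Submodule.span_le]
      rintro _ ⟨⟨j, γ⟩, rfl⟩
      exact ⟨hle j.1 j.2 (hmem j γ), hhomog j γ⟩
    · rintro q ⟨hqM, hqE⟩
      have key : M ≤ Submodule.comap (homogeneousComponent e)
          (Submodule.span K (Set.range fun ji : Σ j, fib j => f ji.1 ji.2)) := by
        rw [hsup]
        refine iSup₂_le fun p hp => ?_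
        rw [cone, Submodule.span_le]
        rintro _ ⟨γ, hγ, rfl⟩
        have hg := mon_mul_homog p (hh p hp) γ
        simp only [SetLike.mem_coe, Submodule.mem_comap]
        rw [homogeneousComponent_of_mem hg]
        by_cases hd : e = coneDeg p + ∑ i, γ i
        · rw [if_pos hd]
          exact Submodule.subset_span ⟨⟨⟨p, hp⟩, ⟨γ, hγ, hd.symm⟩⟩, rfl⟩
        · rw [if_neg hd]; exact Submodule.zero_mem _
      have hq' : homogeneousComponent e q = q := by
        rw [homogeneousComponent_of_mem hqE, if_pos rfl]
      have h2 := key hqM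
      rw [Submodule.mem_comap, hq'] at h2
      exact h2
  -- linear independence
  have hli : LinearIndependent K (fun ji : Σ j, fib j => f ji.1 ji.2) := by
    apply linearIndependent_iUnion_finite
    · intro j
      have li1 : LinearIndependent K fun s : Fin N →₀ ℕ => (monomial s (1 : K)) := by
        have := (basisMonomials (Fin N) K).linearIndependent
        rwa [coe_basisMonomials] at this
      have hker : LinearMap.ker (LinearMap.mulRight K j.1.2.2) = ⊥ := by
        rw [LinearMap.ker_eq_bot]
        intro u v huv
        simp only [LinearMap.mulRight_apply] at huv
        exact mul_right_cancel₀ (hhom j.1 j.2).1 huv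
      have li2 := li1.map' (LinearMap.mulRight K j.1.2.2) hker
      have hinj : Function.Injective fun γ : fib j => j.1.1 + γ.1 := by
        intro a b hab
        exact Subtype.ext (add_left_cancel hab)
      exact li2.comp _ hinj
    · intro j t htfin hjt
      refine Disjoint.mono ?_ ?_ (hdisj j.1 j.2)
      · rw [Submodule.span_le]
        rintro _ ⟨γ, rfl⟩
        exact hmem j γ
      · refine iSup₂_le fun i hi => ?_
        have h1 : Submodule.span K (Set.range (f i)) ≤ cone i.1 := by
          rw [Submodule.span_le]
          rintro _ ⟨γ, rfl⟩
          exact hmem i γ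
        refine le_trans h1 ?_
        have hne : i.1 ≠ j.1 := fun hh' => hjt (by rwa [Subtype.ext hh'] at hi)
        exact le_biSup cone (Finset.mem_erase.mpr ⟨hne, i.2⟩)
  -- Fintype instances
  haveI instF : ∀ j : {x // x ∈ 𝒟}, Fintype (fib j) := fun j =>
    Fintype.ofEquiv _ (fiberEquivSym j.1.2.1 (coneDeg j.1) e (le_of_lt (he j.1 j.2))).symm
  -- compute the rank
  have hrank : Module.finrank K ↥(M ⊓ homogeneousSubmodule (Fin N) K e) =
      Fintype.card (Σ j, fib j) := by
    rw [← hspan]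
    exact finrank_span_eq_card hli
  rw [hrank, Fintype.card_sigma]
  -- compute each fiber cardinality
  have hcard : ∀ j : {x // x ∈ 𝒟}, Fintype.card (fib j) =
      (j.1.2.1.card + (e - coneDeg j.1) - 1).choose (e - coneDeg j.1) := by
    intro j
    rw [Fintype.card_congr (fiberEquivSym j.1.2.1 (coneDeg j.1) e (le_of_lt (he j.1 j.2)))]
    rw [Sym.card_sym_eq_choose]
    congr 1
    simp
  simp_rw [hcard]
  rw [Finset.sum_coe_sort 𝒟 (fun p => (p.2.1.card + (e - coneDeg p) - 1).choose (e - coneDeg p))]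
  rw [Finset.sum_filter]
  refine Finset.sum_congr rfl fun p hp => ?_
  have hm : 1 ≤ e - coneDeg p := by have := he p hp; omega
  by_cases hy : p.2.1.Nonempty
  · rw [if_pos hy]
    have hk : 1 ≤ p.2.1.card := Finset.card_pos.mpr hy
    have h1 : e - coneDeg p + p.2.1.card - 1 = p.2.1.card + (e - coneDeg p) - 1 := by omega
    have h2 : p.2.1.card - 1 = p.2.1.card + (e - coneDeg p) - 1 - (e - coneDeg p) := by omega
    rw [h1, h2, Nat.choose_symm (by omega)]
  · rw [if_neg hy]
    rw [Finset.not_nonempty_iff_eq_empty] at hy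
    rw [hy, Finset.card_empty]
    exact Nat.choose_eq_zero_of_lt (by omega)


theorem hilbert_function_of_cone_decomposition {K : Type*} [Field K]
    {N : ℕ} (hN : 1 ≤ N) (M : Submodule K (MvPolynomial (Fin N) K))
    (hM : IsHomogeneousSubspace M)
    (𝒟 : Finset (ConeTriple N K)) (h𝒟 : IsConeDecomp 𝒟 M) :
    ∃ P : Polynomial ℚ, ∀ e : ℕ, (∀ p ∈ 𝒟, coneDeg p < e) →
      Module.finrank K ↥(M ⊓ homogeneousSubmodule (Fin N) K e) =
        (∑ p ∈ 𝒟.filter (fun p => p.2.1.Nonempty),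
          (e - coneDeg p + p.2.1.card - 1).choose (p.2.1.card - 1)) ∧
      (Module.finrank K ↥(M ⊓ homogeneousSubmodule (Fin N) K e) : ℚ) =
        P.eval (e : ℚ) := by
  refine ⟨∑ p ∈ 𝒟.filter (fun p => p.2.1.Nonempty),
    (((p.2.1.card - 1).factorial : ℚ)⁻¹ • ((descPochhammer ℚ (p.2.1.card - 1)).comp
      (Polynomial.X + Polynomial.C ((p.2.1.card : ℚ) - 1 - (coneDeg p : ℚ))))), ?_⟩
  intro e he
  have h1 := finrank_of_cone_decomp M 𝒟 h𝒟 e he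
  refine ⟨h1, ?_⟩
  rw [h1, Polynomial.eval_finset_sum, Nat.cast_sum]
  refine Finset.sum_congr rfl fun p hp => ?_
  obtain ⟨hpD, hy⟩ := Finset.mem_filter.mp hp
  have hk : 1 ≤ p.2.1.card := Finset.card_pos.mpr hy
  have hd : coneDeg p < e := he p hpD
  set k := p.2.1.card with hkdef
  set d := coneDeg p with hddef
  have hcast : (e : ℚ) + ((k : ℚ) - 1 - (d : ℚ)) = ((e - d + k - 1 : ℕ) : ℚ) := by
    rw [Nat.cast_sub (by omega : 1 ≤ e - d + k), Nat.cast_add,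
      Nat.cast_sub (le_of_lt hd)]
    push_cast
    ring
  rw [Polynomial.eval_smul, Polynomial.eval_comp, Polynomial.eval_add, Polynomial.eval_X,
    Polynomial.eval_C, hcast, descPochhammer_eval_eq_descFactorial,
    Nat.descFactorial_eq_factorial_mul_choose]
  rw [smul_eq_mul, Nat.cast_mul, ← mul_assoc, inv_mul_cancel₀ (by
    exact_mod_cast Nat.factorial_ne_zero _), one_mul]
end
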